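/- For n ≥ 2 and distinct letters a, b, the word a^n b a^m b is an ins-robust primitive word whenever m > n + 1 and m ≠ 2n, while (a^m b)² = a^m b a^m b is not ins-robust (being non-primitive). -/

import Mathlib

/-- `wpow v n` is the word `v` repeated `n` times. -/
def wpow {V : Type*} (v : List V) : ℕ → List V
  | 0 => []
  | n + 1 => v ++ wpow v n

/-- A word is primitive if it is nonempty and not a proper power. -/
def Primitive {V : Type*} (w : List V) : Prop :=
  w ≠ [] ∧ ∀ (v : List V) (n : ℕ), w = wpow v n → n = 1

/-- A word is ins-robust if it is primitive and inserting any letter at any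
position yields a primitive word. -/
def InsRobust {V : Type*} (w : List V) : Prop :=
  Primitive w ∧ ∀ (x y : List V) (a : V), w = x ++ y → Primitive (x ++ a :: y)

/-- `HasPeriod w p` : the word `w` is periodic with period `p`. -/
def HasPeriod {V : Type*} (w : List V) (p : ℕ) : Prop :=
  ∀ i, i + p < w.length → w[i]? = w[i + p]?

lemma wpow_length {V : Type*} (v : List V) (k : ℕ) : (wpow v k).length = k * v.length := by
  induction k with
  | zero => simp [wpow]
  | succ k ih => simp [wpow, ih]; ring

lemma wpow_single {V : Type*} (a : V) (n : ℕ) : wpow [a] n = List.replicate n a := by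
  induction n with
  | zero => simp [wpow]
  | succ n ih => simp [wpow, ih, List.replicate_succ]

lemma wpow_period {V : Type*} (v : List V) (k : ℕ) :
    ∀ i, i + v.length < (wpow v k).length → (wpow v k)[i]? = (wpow v k)[i + v.length]? := by
  induction k with
  | zero => intro i h; simp [wpow] at h
  | succ k ih =>
    intro i h
    have hlenk : (wpow v k).length = k * v.length := wpow_length v k
    rw [wpow_length, Nat.succ_mul] at h
    have hik : i < k * v.length := by omega
    have hk0 : 0 < k := by
      rcases Nat.eq_zero_or_pos k with h0 | h0
      · rw [h0, Nat.zero_mul] at hik; omega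
      · exact h0
    show (v ++ wpow v k)[i]? = (v ++ wpow v k)[i + v.length]?
    by_cases hi : i < v.length
    · rw [List.getElem?_append_left hi,
        List.getElem?_append_right (by omega : v.length ≤ i + v.length),
        Nat.add_sub_cancel]
      obtain ⟨k', rfl⟩ : ∃ k', k = k' + 1 := ⟨k - 1, by omega⟩
      show v[i]? = (v ++ wpow v k')[i]?
      rw [List.getElem?_append_left hi]
    · push_neg at hi
      rw [List.getElem?_append_right hi,
        List.getElem?_append_right (by omega : v.length ≤ i + v.length)]
      have h2 := ih (i - v.length) (by omega)
      rw [show i - v.length + v.length = i by omega] at h2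
      rw [show i + v.length - v.length = i by omega]
      exact h2

lemma twoB {V : Type*} {b : V} {v : List V} {k : ℕ} (hk : k ≠ 1)
    (hne : wpow v k ≠ []) {i₁ i₂ : ℕ} (h12 : i₁ < i₂)
    (hb : ∀ j, (wpow v k)[j]? = some b ↔ j = i₁ ∨ j = i₂) :
    (wpow v k).length = 2 * (i₂ - i₁) := by
  set w := wpow v k with hw
  set p := v.length with hpdef
  have hL : w.length = k * p := wpow_length v k
  have hper : ∀ i, i + p < w.length → w[i]? = w[i+p]? := wpow_period v k
  have hb1 : w[i₁]? = some b := (hb i₁).mpr (Or.inl rfl)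
  have hb2 : w[i₂]? = some b := (hb i₂).mpr (Or.inr rfl)
  have hi1L : i₁ < w.length := by
    by_contra h; rw [List.getElem?_eq_none (by omega)] at hb1; exact Option.some_ne_none _ hb1.symm
  have hi2L : i₂ < w.length := by
    by_contra h; rw [List.getElem?_eq_none (by omega)] at hb2; exact Option.some_ne_none _ hb2.symm
  have hLpos : 0 < w.length := List.length_pos_iff.mpr hne
  have hppos : 0 < p := by
    rcases Nat.eq_zero_or_pos p with h0 | h0
    · rw [h0, Nat.mul_zero] at hL; omega
    · exact h0
  have hk2 : 2 ≤ k := by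
    rcases Nat.eq_zero_or_pos k with h0 | h0
    · rw [h0, Nat.zero_mul] at hL; omega
    · omega
  have h2p : 2 * p ≤ w.length := by rw [hL]; exact Nat.mul_le_mul_right p hk2
  have hi1p : i₁ < p := by
    by_contra h; push_neg at h
    have h2 := hper (i₁ - p) (by omega)
    rw [show i₁ - p + p = i₁ by omega, hb1, hb] at h2
    omega
  have hI2 : i₁ + p = i₂ := by
    have h2 := hper i₁ (by omega)
    rw [hb1] at h2
    have := (hb (i₁ + p)).mp h2.symm
    omega
  have h3 : ¬ (i₂ + p < w.length) := by
    intro h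
    have h2 := hper i₂ h
    rw [hb2] at h2
    have := (hb (i₂ + p)).mp h2.symm
    omega
  have hk3 : k ≤ 2 := by
    by_contra h; push_neg at h
    have : 3 * p ≤ w.length := by rw [hL]; exact Nat.mul_le_mul_right p h
    omega
  have : k = 2 := by omega
  rw [this] at hL
  omega

lemma threeB {V : Type*} {b : V} {v : List V} {k : ℕ} (hk : k ≠ 1)
    (hne : wpow v k ≠ []) {i₁ i₂ i₃ : ℕ} (h12 : i₁ < i₂) (h23 : i₂ < i₃)
    (hb : ∀ j, (wpow v k)[j]? = some b ↔ j = i₁ ∨ j = i₂ ∨ j = i₃) :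
    ∃ p, 0 < p ∧ i₂ = i₁ + p ∧ i₃ = i₁ + 2 * p ∧ (wpow v k).length = 3 * p := by
  set w := wpow v k with hw
  set p := v.length with hpdef
  have hL : w.length = k * p := wpow_length v k
  have hper : ∀ i, i + p < w.length → w[i]? = w[i+p]? := wpow_period v k
  have hb1 : w[i₁]? = some b := (hb i₁).mpr (Or.inl rfl)
  have hb2 : w[i₂]? = some b := (hb i₂).mpr (Or.inr (Or.inl rfl))
  have hb3 : w[i₃]? = some b := (hb i₃).mpr (Or.inr (Or.inr rfl))
  have hi1L : i₁ < w.length := by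
    by_contra h; rw [List.getElem?_eq_none (by omega)] at hb1; exact Option.some_ne_none _ hb1.symm
  have hi2L : i₂ < w.length := by
    by_contra h; rw [List.getElem?_eq_none (by omega)] at hb2; exact Option.some_ne_none _ hb2.symm
  have hi3L : i₃ < w.length := by
    by_contra h; rw [List.getElem?_eq_none (by omega)] at hb3; exact Option.some_ne_none _ hb3.symm
  have hLpos : 0 < w.length := List.length_pos_iff.mpr hne
  have hppos : 0 < p := by
    rcases Nat.eq_zero_or_pos p with h0 | h0
    · rw [h0, Nat.mul_zero] at hL; omega
    · exact h0
  have hk2 : 2 ≤ k := by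
    rcases Nat.eq_zero_or_pos k with h0 | h0
    · rw [h0, Nat.zero_mul] at hL; omega
    · omega
  have h2p : 2 * p ≤ w.length := by rw [hL]; exact Nat.mul_le_mul_right p hk2
  have hi1p : i₁ < p := by
    by_contra h; push_neg at h
    have h2 := hper (i₁ - p) (by omega)
    rw [show i₁ - p + p = i₁ by omega, hb1, hb] at h2
    omega
  have hstep : i₁ + p = i₂ ∨ i₁ + p = i₃ := by
    have h2 := hper i₁ (by omega)
    rw [hb1] at h2
    have := (hb (i₁ + p)).mp h2.symm
    omega
  rcases hstep with hI2 | hI3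
  · -- i₂ = i₁ + p
    have hlast : ¬ (i₃ + p < w.length) := by
      intro h
      have h2 := hper i₃ h
      rw [hb3] at h2
      have := (hb (i₃ + p)).mp h2.symm
      omega
    have hk3 : 3 ≤ k := by
      by_contra h; push_neg at h
      have hk2' : k = 2 := by omega
      rw [hk2'] at hL
      -- L = 2p, i₃ > i₂ = i₁ + p ≥ p, so i₃ - p is a b-position
      have h2 := hper (i₃ - p) (by omega)
      rw [show i₃ - p + p = i₃ by omega, hb3, hb] at h2
      omega
    have h3p : 3 * p ≤ w.length := by rw [hL]; exact Nat.mul_le_mul_right p hk3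
    have hI3 : i₂ + p = i₃ := by
      have h2 := hper i₂ (by omega)
      rw [hb2] at h2
      have := (hb (i₂ + p)).mp h2.symm
      omega
    have hk4 : k ≤ 3 := by
      by_contra h; push_neg at h
      have : 4 * p ≤ w.length := by rw [hL]; exact Nat.mul_le_mul_right p h
      omega
    have : k = 3 := by omega
    rw [this] at hL
    exact ⟨p, hppos, by omega, by omega, by omega⟩
  · -- i₁ + p = i₃ : contradiction
    exfalso
    have hi2p : i₂ < p := by
      by_contra h; push_neg at h
      have h2 := hper (i₂ - p) (by omega)
      rw [show i₂ - p + p = i₂ by omega, hb2, hb] at h2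
      omega
    have : ¬ (i₂ + p < w.length) := by
      intro h
      have h2 := hper i₂ h
      rw [hb2] at h2
      have := (hb (i₂ + p)).mp h2.symm
      omega
    omega

lemma getElem?_rep_append {V : Type*} (a : V) (p : ℕ) (l : List V) (j : ℕ) :
    (List.replicate p a ++ l)[j]? = if j < p then some a else l[j - p]? := by
  split_ifs with h
  · rw [List.getElem?_append_left (by simpa using h), List.getElem?_replicate, if_pos h]
  · rw [List.getElem?_append_right (by simpa using h), List.length_replicate]

lemma char2 {V : Type*} {a b : V} (hab : a ≠ b) (n m : ℕ) (j : ℕ) :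
    (List.replicate n a ++ b :: (List.replicate m a ++ [b]))[j]? = some b ↔
      j = n ∨ j = n + m + 1 := by
  rw [getElem?_rep_append]
  split_ifs with h1
  · exact iff_of_false (fun h => hab (Option.some.inj h)) (by omega)
  · push_neg at h1
    rcases Nat.eq_zero_or_pos (j - n) with h2 | h2
    · rw [h2, List.getElem?_cons_zero]
      exact iff_of_true rfl (by omega)
    · rw [show j - n = (j - n - 1) + 1 by omega, List.getElem?_cons_succ,
        getElem?_rep_append]
      split_ifs with h3
      · exact iff_of_false (fun h => hab (Option.some.inj h)) (by omega)
      · push_neg at h3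
        rcases Nat.eq_zero_or_pos (j - n - 1 - m) with h4 | h4
        · rw [h4, List.getElem?_cons_zero]
          exact iff_of_true rfl (by omega)
        · rw [show j - n - 1 - m = (j - n - 1 - m - 1) + 1 by omega,
            List.getElem?_cons_succ]
          simp only [List.getElem?_nil]
          exact iff_of_false (fun h => Option.some_ne_none _ h.symm) (by omega)

lemma insert_getElem? {V : Type*} (x y : List V) (c : V) (j : ℕ) :
    (x ++ c :: y)[j]? =
      if j < x.length then (x ++ y)[j]?
      else if j = x.length then some c
      else (x ++ y)[j - 1]? := by
  split_ifs with h1 h2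
  · rw [List.getElem?_append_left h1, List.getElem?_append_left h1]
  · rw [h2, List.getElem?_append_right (le_refl _), Nat.sub_self, List.getElem?_cons_zero]
  · push_neg at h1
    rw [List.getElem?_append_right h1, List.getElem?_append_right (by omega : x.length ≤ j - 1),
      show j - x.length = (j - 1 - x.length) + 1 by omega, List.getElem?_cons_succ]

theorem stmt13 {V : Type*} (a b : V) (hab : a ≠ b) (n m : ℕ)
    (hn : 2 ≤ n) (hm : n + 1 < m) (hm2 : m ≠ 2 * n) :
    InsRobust (wpow [a] n ++ [b] ++ wpow [a] m ++ [b]) ∧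
    ¬ InsRobust (wpow [a] m ++ [b] ++ wpow [a] m ++ [b]) := by
  constructor
  · -- the word is a^n b a^m b
    have hW : wpow [a] n ++ [b] ++ wpow [a] m ++ [b] =
        List.replicate n a ++ b :: (List.replicate m a ++ [b]) := by
      simp [wpow_single, List.append_assoc]
    rw [hW]
    set w : List V := List.replicate n a ++ b :: (List.replicate m a ++ [b]) with hwdef
    have hbw : ∀ j, w[j]? = some b ↔ j = n ∨ j = n + m + 1 := char2 hab n m
    have hlenW : w.length = n + m + 2 := by simp [hwdef]; omega
    have hwne : w ≠ [] := by
      intro h; rw [h] at hlenW; simp at hlenW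
    constructor
    · refine ⟨hwne, fun v k hvk => ?_⟩
      by_contra hk
      have := twoB hk (hvk ▸ hwne) (show n < n + m + 1 by omega) (fun j => hvk ▸ hbw j)
      rw [← hvk, hlenW] at this
      omega
    · intro x y c hxy
      have hbw' : ∀ j, (x ++ y)[j]? = some b ↔ j = n ∨ j = n + m + 1 := by
        intro j; rw [← hxy]; exact hbw j
      have hlen' : (x ++ c :: y).length = n + m + 3 := by
        have : (x ++ y).length = n + m + 2 := by rw [← hxy]; exact hlenW
        simp at this ⊢; omega
      have ht : x.length ≤ n + m + 2 := by
        have : (x ++ y).length = n + m + 2 := by rw [← hxy]; exact hlenW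
        simp at this; omega
      have hne' : (x ++ c :: y) ≠ [] := by simp
      refine ⟨hne', fun v k hvk => ?_⟩
      by_contra hk
      by_cases hc : c = b
      · subst hc
        -- three b's
        rcases lt_trichotomy x.length (n + 1) with htc | htc | htc
        · -- t ≤ n : positions x.length, n+1, n+m+2
          have hb3 : ∀ j, (x ++ c :: y)[j]? = some c ↔
              j = x.length ∨ j = n + 1 ∨ j = n + m + 2 := by
            intro j
            rw [insert_getElem?]
            split_ifs with h1 h2
            · rw [hbw']; omega
            · exact iff_of_true rfl (by omega)
            · rw [hbw']; omega
          obtain ⟨p, hp0, h2, h3, hL3⟩ :=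
            threeB hk (hvk ▸ hne') (show x.length < n + 1 by omega)
              (show n + 1 < n + m + 2 by omega) (fun j => hvk ▸ hb3 j)
          rw [← hvk, hlen'] at hL3
          omega
        · -- t = n + 1 : inserted b right after the first b? positions n, n+1, n+m+2
          -- here x.length = n+1 > n, so positions n, x.length, n+m+2
          have hb3 : ∀ j, (x ++ c :: y)[j]? = some c ↔
              j = n ∨ j = x.length ∨ j = n + m + 2 := by
            intro j
            rw [insert_getElem?]
            split_ifs with h1 h2
            · rw [hbw']; omega
            · exact iff_of_true rfl (by omega)
            · rw [hbw']; omega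
          obtain ⟨p, hp0, h2, h3, hL3⟩ :=
            threeB hk (hvk ▸ hne') (show n < x.length by omega)
              (show x.length < n + m + 2 by omega) (fun j => hvk ▸ hb3 j)
          rw [← hvk, hlen'] at hL3
          omega
        · rcases lt_or_ge x.length (n + m + 2) with htc2 | htc2
          · -- n + 1 < t < n+m+2 : positions n, x.length, n+m+2
            have hb3 : ∀ j, (x ++ c :: y)[j]? = some c ↔
                j = n ∨ j = x.length ∨ j = n + m + 2 := by
              intro j
              rw [insert_getElem?]
              split_ifs with h1 h2
              · rw [hbw']; omega
              · exact iff_of_true rfl (by omega)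
              · rw [hbw']; omega
            obtain ⟨p, hp0, h2, h3, hL3⟩ :=
              threeB hk (hvk ▸ hne') (show n < x.length by omega)
                (show x.length < n + m + 2 by omega) (fun j => hvk ▸ hb3 j)
            rw [← hvk, hlen'] at hL3
            omega
          · -- t = n+m+2 : positions n, n+m+1, n+m+2
            have htc3 : x.length = n + m + 2 := by omega
            have hb3 : ∀ j, (x ++ c :: y)[j]? = some c ↔
                j = n ∨ j = n + m + 1 ∨ j = n + m + 2 := by
              intro j
              rw [insert_getElem?]
              split_ifs with h1 h2
              · rw [hbw']; omega
              · exact iff_of_true rfl (by omega)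
              · rw [hbw']; omega
            obtain ⟨p, hp0, h2, h3, hL3⟩ :=
              threeB hk (hvk ▸ hne') (show n < n + m + 1 by omega)
                (show n + m + 1 < n + m + 2 by omega) (fun j => hvk ▸ hb3 j)
            omega
      · -- c ≠ b : two b's
        rcases lt_trichotomy x.length (n + 1) with htc | htc | htc
        · -- positions n+1, n+m+2
          have hb2 : ∀ j, (x ++ c :: y)[j]? = some b ↔ j = n + 1 ∨ j = n + m + 2 := by
            intro j
            rw [insert_getElem?]
            split_ifs with h1 h2
            · rw [hbw']; omega
            · exact iff_of_false (fun h => hc (Option.some.inj h)) (by omega)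
            · rw [hbw']; omega
          have := twoB hk (hvk ▸ hne') (show n + 1 < n + m + 2 by omega)
            (fun j => hvk ▸ hb2 j)
          rw [← hvk, hlen'] at this
          omega
        · -- t = n + 1 : positions n, n+m+2
          have hb2 : ∀ j, (x ++ c :: y)[j]? = some b ↔ j = n ∨ j = n + m + 2 := by
            intro j
            rw [insert_getElem?]
            split_ifs with h1 h2
            · rw [hbw']; omega
            · exact iff_of_false (fun h => hc (Option.some.inj h)) (by omega)
            · rw [hbw']; omega
          have := twoB hk (hvk ▸ hne') (show n < n + m + 2 by omega)
            (fun j => hvk ▸ hb2 j)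
          rw [← hvk, hlen'] at this
          omega
        · rcases lt_or_ge x.length (n + m + 2) with htc2 | htc2
          · -- positions n, n+m+2
            have hb2 : ∀ j, (x ++ c :: y)[j]? = some b ↔ j = n ∨ j = n + m + 2 := by
              intro j
              rw [insert_getElem?]
              split_ifs with h1 h2
              · rw [hbw']; omega
              · exact iff_of_false (fun h => hc (Option.some.inj h)) (by omega)
              · rw [hbw']; omega
            have := twoB hk (hvk ▸ hne') (show n < n + m + 2 by omega)
              (fun j => hvk ▸ hb2 j)
            rw [← hvk, hlen'] at this
            omega
          · -- t = n+m+2 : positions n, n+m+1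
            have htc3 : x.length = n + m + 2 := by omega
            have hb2 : ∀ j, (x ++ c :: y)[j]? = some b ↔ j = n ∨ j = n + m + 1 := by
              intro j
              rw [insert_getElem?]
              split_ifs with h1 h2
              · rw [hbw']
              · exact iff_of_false (fun h => hc (Option.some.inj h)) (by omega)
              · rw [hbw']; omega
            have := twoB hk (hvk ▸ hne') (show n < n + m + 1 by omega)
              (fun j => hvk ▸ hb2 j)
            rw [← hvk, hlen'] at this
            omega
  · intro h
    have hprim := h.1.2
    have h2 := hprim (wpow [a] m ++ [b]) 2 (by simp [wpow, List.append_assoc])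
    omega
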